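/- Define polynomials R_n(z) by the generating function ∑_{n=0}^∞ R_n(z) t^n = (1/√t)·(1/(1-t))·4 log((1+√t)/(1-√t)) / [((1+√t)/(1-√t))^{√z} + ((1-√t)/(1+√t))^{√z} + 2]. Then R_n(0) = 2 ∑_{k=0}^n 1/(2k+1) and R_n(1) = 2/(2n+1) for every n ≥ 0. -/

import Mathlib

open PowerSeries Finset

/-- The power series `S(t) = ∑ 2 t^m/(2m+1)`, so that
`log((1+√t)/(1-√t)) = √t · S(t)`. -/
noncomputable def Sser : PowerSeries (Polynomial ℚ) :=
  PowerSeries.mk fun m => Polynomial.C (2 / (2 * (m : ℚ) + 1))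

/-- The geometric series `1/(1-t)`. -/
noncomputable def geomSer : PowerSeries (Polynomial ℚ) :=
  PowerSeries.mk fun _ => (1 : Polynomial ℚ)

/-- The `n`-th term `x^n (t·S(t)²)^n / (2n)!` in the expansion of
`cosh(√x log((1+√t)/(1-√t)))`. -/
noncomputable def coshTerm (n : ℕ) : PowerSeries (Polynomial ℚ) :=
  PowerSeries.C (R := Polynomial ℚ)
      (Polynomial.C ((Nat.factorial (2 * n) : ℚ)⁻¹) * Polynomial.X ^ n) *
    (PowerSeries.X * Sser ^ 2) ^ n

/-- The polynomial `Q_k`, the coefficient of `t^k` in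
`(1/(1-t)) cosh(√x log((1+√t)/(1-√t)))`.  (Terms `coshTerm n` with `n > k`
have `t`-order greater than `k`, so the truncated sum suffices.) -/
noncomputable def Qpoly (k : ℕ) : Polynomial ℚ :=
  PowerSeries.coeff (R := Polynomial ℚ) k
    (geomSer * ∑ n ∈ Finset.range (k + 1), coshTerm n)

/-- The series `cosh(√z κ) = ∑_n z^n (t S(t)²)^n/(2n)!` (with `t = tanh²(κ/2)`,
`κ = log((1+√t)/(1-√t))`), defined coefficient-wise via the truncated sums. -/
noncomputable def coshSer : PowerSeries (Polynomial ℚ) :=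
  PowerSeries.mk fun m =>
    PowerSeries.coeff (R := Polynomial ℚ) m (∑ n ∈ Finset.range (m + 1), coshTerm n)

/-- The denominator `((1+√t)/(1-√t))^{√z} + ((1-√t)/(1+√t))^{√z} + 2
= 2 cosh(√z κ) + 2`. -/
noncomputable def Dser : PowerSeries (Polynomial ℚ) := 2 * coshSer + 2

/-- The constant coefficient of `Dser`, namely `4`, as a unit of `ℚ[z]`. -/
noncomputable def Dunit : (Polynomial ℚ)ˣ :=
  Units.map (Polynomial.C : ℚ →+* Polynomial ℚ).toMonoidHom (Units.mk0 (4 : ℚ) (by norm_num))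

/-- The polynomial `R_n(z)`: the coefficient of `t^n` in the generating function
`(1/√t)(1/(1-t)) · 4 log((1+√t)/(1-√t)) / [((1+√t)/(1-√t))^{√z} +
((1-√t)/(1+√t))^{√z} + 2] = 4 S(t) (1/(1-t)) / Dser`. -/
noncomputable def Rn (n : ℕ) : Polynomial ℚ :=
  PowerSeries.coeff (R := Polynomial ℚ) n
    (4 * Sser * geomSer * PowerSeries.invOfUnit Dser Dunit)


noncomputable section AuxQ

/-- `S(t) = ∑ 2 t^m/(2m+1)` over `ℚ`. -/
def Sq : PowerSeries ℚ := PowerSeries.mk fun m => 2 / (2 * (m : ℚ) + 1)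

/-- geometric series over `ℚ`. -/
def Gq : PowerSeries ℚ := PowerSeries.mk fun _ => (1 : ℚ)

def Wq : PowerSeries ℚ := X * Sq ^ 2

def Tq (n : ℕ) : PowerSeries ℚ := C (R := ℚ) ((Nat.factorial (2 * n) : ℚ)⁻¹) * Wq ^ n

def Uq (n : ℕ) : PowerSeries ℚ := C (R := ℚ) ((Nat.factorial (2 * n + 1) : ℚ)⁻¹) * Wq ^ n

def fq : PowerSeries ℚ :=
  PowerSeries.mk fun m => coeff (R := ℚ) m (∑ n ∈ range (m + 1), Tq n)

def hq : PowerSeries ℚ :=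
  PowerSeries.mk fun m => coeff (R := ℚ) m (∑ n ∈ range (m + 1), Uq n)

lemma coeff_Sq (m : ℕ) : coeff (R := ℚ) m Sq = 2 / (2 * (m : ℚ) + 1) := coeff_mk _ _

lemma coeff_Gq (m : ℕ) : coeff (R := ℚ) m Gq = 1 := coeff_mk _ _

lemma X_pow_dvd_Wq_pow (n : ℕ) : (X : PowerSeries ℚ) ^ n ∣ Wq ^ n := by
  rw [Wq, mul_pow]; exact Dvd.intro _ rfl

lemma coeff_Tq_zero {m n : ℕ} (h : m < n) : coeff (R := ℚ) m (Tq n) = 0 := by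
  have : (X : PowerSeries ℚ) ^ n ∣ Tq n := (X_pow_dvd_Wq_pow n).mul_left _
  exact X_pow_dvd_iff.mp this m h

lemma coeff_Uq_zero {m n : ℕ} (h : m < n) : coeff (R := ℚ) m (Uq n) = 0 := by
  have : (X : PowerSeries ℚ) ^ n ∣ Uq n := (X_pow_dvd_Wq_pow n).mul_left _
  exact X_pow_dvd_iff.mp this m h

lemma trunc_sum {V : ℕ → PowerSeries ℚ} (hV : ∀ m n : ℕ, m < n → coeff (R := ℚ) m (V n) = 0)
    {m N : ℕ} (h : m ≤ N) :
    coeff (R := ℚ) m (∑ n ∈ range (N + 1), V n) = coeff (R := ℚ) m (∑ n ∈ range (m + 1), V n) := by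
  rw [map_sum, map_sum]
  refine (Finset.sum_subset (Finset.range_subset_range.2 (by omega)) ?_).symm
  intro n _ hn
  exact hV m n (by simpa using hn)

lemma coeff_fq {m N : ℕ} (h : m ≤ N) :
    coeff (R := ℚ) m fq = coeff (R := ℚ) m (∑ n ∈ range (N + 1), Tq n) := by
  rw [fq, coeff_mk, trunc_sum (fun m n => coeff_Tq_zero) h]

lemma coeff_hq {m N : ℕ} (h : m ≤ N) :
    coeff (R := ℚ) m hq = coeff (R := ℚ) m (∑ n ∈ range (N + 1), Uq n) := by
  rw [hq, coeff_mk, trunc_sum (fun m n => coeff_Uq_zero) h]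

lemma agree_mul {a b : PowerSeries ℚ} (c : PowerSeries ℚ) {m : ℕ}
    (hab : ∀ j ≤ m, coeff (R := ℚ) j a = coeff (R := ℚ) j b) :
    coeff (R := ℚ) m (c * a) = coeff (R := ℚ) m (c * b) := by
  rw [coeff_mul, coeff_mul]
  refine Finset.sum_congr rfl fun p hp => ?_
  rw [hab p.2 (Finset.HasAntidiagonal.antidiagonal.snd_le hp)]

lemma hG1 : (1 - X) * Gq = 1 := by
  ext m
  rw [sub_mul, one_mul, map_sub]
  cases m with
  | zero => simp [coeff_Gq, coeff_zero_eq_constantCoeff, Gq]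
  | succ m => simp [coeff_Gq, coeff_succ_X_mul, coeff_one]

lemma hGd : d⁄dX ℚ Gq = Gq ^ 2 := by
  ext m
  rw [coeff_derivative, coeff_Gq, pow_two, coeff_mul]
  rw [Finset.Nat.sum_antidiagonal_eq_sum_range_succ (fun i j => coeff (R := ℚ) i Gq * coeff (R := ℚ) j Gq)]
  simp [coeff_Gq]

lemma two_eq_C : (2 : PowerSeries ℚ) = C (R := ℚ) 2 := (map_ofNat (C (R := ℚ)) 2).symm

lemma Sder : Sq + 2 * X * d⁄dX ℚ Sq = 2 * Gq := by
  have e1 : (2 : PowerSeries ℚ) * X * d⁄dX ℚ Sq = C (R := ℚ) 2 * (X * d⁄dX ℚ Sq) := by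
    rw [two_eq_C]; ring
  have e2 : (2 : PowerSeries ℚ) * Gq = C (R := ℚ) 2 * Gq := by rw [two_eq_C]
  ext m
  rw [map_add, coeff_Sq, e1, e2, coeff_C_mul, coeff_C_mul, coeff_Gq]
  cases m with
  | zero =>
      rw [coeff_zero_eq_constantCoeff, map_mul, constantCoeff_X, zero_mul, mul_zero]
      norm_num
  | succ k =>
      rw [coeff_succ_X_mul, coeff_derivative, coeff_Sq]
      have hk : (2 * ((k:ℚ)+1) + 1) ≠ 0 := by positivity
      push_cast
      field_simp
      ring

lemma dWq : d⁄dX ℚ Wq = 2 * Sq * Gq := by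
  have : d⁄dX ℚ Wq = X * (Sq * d⁄dX ℚ Sq + Sq * d⁄dX ℚ Sq) + Sq ^ 2 * 1 := by
    rw [Wq, Derivation.leibniz, pow_two, Derivation.leibniz, derivative_X]
    simp only [smul_eq_mul]
    try ring
  rw [this]
  linear_combination Sq * Sder

lemma fact_ne (n : ℕ) : ((Nat.factorial n : ℚ)) ≠ 0 :=
  Nat.cast_ne_zero.mpr (Nat.factorial_ne_zero _)

lemma fact_eq1 (k : ℕ) :
    ((Nat.factorial (2 * (k+1)) : ℚ))⁻¹ * ((k:ℚ) + 1) * 2 = ((Nat.factorial (2 * k + 1) : ℚ))⁻¹ := by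
  have h : Nat.factorial (2 * (k+1)) = (2 * k + 2) * Nat.factorial (2 * k + 1) := by
    rw [show 2 * (k+1) = (2 * k + 1) + 1 by ring, Nat.factorial_succ]
  rw [h]
  have h1 : (2 * (k:ℚ) + 2) ≠ 0 := by positivity
  have h2 := fact_ne (2 * k + 1)
  push_cast
  rw [mul_inv]
  field_simp

lemma fact_eq2 (k : ℕ) :
    ((Nat.factorial (2 * (k+1) + 1) : ℚ))⁻¹ * ((k:ℚ) + 1) * 2 =
      ((Nat.factorial (2 * (k+1)) : ℚ))⁻¹ - ((Nat.factorial (2 * (k+1) + 1) : ℚ))⁻¹ := by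
  have h : Nat.factorial (2 * (k+1) + 1) = (2 * (k+1) + 1) * Nat.factorial (2 * (k+1)) :=
    Nat.factorial_succ _
  rw [h]
  have h1 : (2 * ((k:ℚ)+1) + 1) ≠ 0 := by positivity
  have h2 := fact_ne (2 * (k+1))
  push_cast
  rw [mul_inv]
  field_simp
  try ring
  try exact Or.inl (by ring)

lemma dTq (k : ℕ) : d⁄dX ℚ (Tq (k + 1)) = Sq * Gq * Uq k := by
  rw [Tq, Derivation.leibniz, Derivation.leibniz_pow, derivative_C, dWq]
  simp only [smul_eq_mul, mul_zero, add_zero, Nat.add_sub_cancel, nsmul_eq_mul]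
  have hc : C (R := ℚ) ((Nat.factorial (2 * (k+1)) : ℚ))⁻¹ * ((k+1 : ℕ) : PowerSeries ℚ) * 2 =
      C (R := ℚ) ((Nat.factorial (2 * k + 1) : ℚ))⁻¹ := by
    rw [two_eq_C, ← map_natCast (C (R := ℚ)) (k+1), ← map_mul, ← map_mul]
    congr 1
    push_cast
    exact fact_eq1 k
  rw [Uq]
  linear_combination (Wq ^ k * Sq * Gq) * hc

lemma dUq (k : ℕ) :
    X * Sq * d⁄dX ℚ (Uq (k + 1)) = (Tq (k + 1) - Uq (k + 1)) * Gq := by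
  have hd : d⁄dX ℚ (Uq (k + 1)) =
      C (R := ℚ) ((Nat.factorial (2 * (k+1) + 1) : ℚ))⁻¹ *
        (((k+1 : ℕ) : PowerSeries ℚ) * (Wq ^ k * (2 * Sq * Gq))) := by
    rw [Uq, Derivation.leibniz, Derivation.leibniz_pow, derivative_C, dWq]
    simp only [smul_eq_mul, mul_zero, add_zero, Nat.add_sub_cancel, nsmul_eq_mul]
  rw [hd]
  have hc : C (R := ℚ) ((Nat.factorial (2 * (k+1) + 1) : ℚ))⁻¹ * ((k+1 : ℕ) : PowerSeries ℚ) * 2 =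
      C (R := ℚ) ((Nat.factorial (2 * (k+1)) : ℚ))⁻¹ - C (R := ℚ) ((Nat.factorial (2 * (k+1) + 1) : ℚ))⁻¹ := by
    rw [two_eq_C, ← map_natCast (C (R := ℚ)) (k+1), ← map_mul, ← map_mul, ← map_sub]
    congr 1
    push_cast
    exact fact_eq2 k
  have hW : Wq ^ (k+1) = Wq ^ k * (X * Sq ^ 2) := by rw [pow_succ, Wq]
  rw [Tq, Uq, hW]
  linear_combination (Wq ^ k * X * Sq ^ 2 * Gq) * hc
lemma Tq0 : Tq 0 = 1 := by simp [Tq]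

lemma Uq0 : Uq 0 = 1 := by simp [Uq]

lemma cfq : coeff (R := ℚ) 0 fq = 1 := by
  rw [coeff_fq (le_refl 0)]
  simp [Tq0]

lemma chq : coeff (R := ℚ) 0 hq = 1 := by
  rw [coeff_hq (le_refl 0)]
  simp [Uq0]

lemma cSq : constantCoeff (R := ℚ) Sq = 2 := by
  rw [← coeff_zero_eq_constantCoeff, coeff_Sq]; norm_num

lemma cGq : constantCoeff (R := ℚ) Gq = 1 := by
  rw [← coeff_zero_eq_constantCoeff, coeff_Gq]

lemma I1 : d⁄dX ℚ fq = Sq * Gq * hq := by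
  ext m
  rw [coeff_derivative, coeff_fq (le_refl (m+1)), ← coeff_derivative, map_sum,
    Finset.sum_range_succ', Tq0, Derivation.map_one_eq_zero, add_zero]
  simp only [dTq]
  rw [← Finset.mul_sum]
  exact agree_mul (Sq * Gq) fun j hj => (coeff_hq hj).symm

lemma I2 : X * Sq * d⁄dX ℚ hq = (fq - hq) * Gq := by
  have assoc : X * Sq * d⁄dX ℚ hq = X * (Sq * d⁄dX ℚ hq) := by ring
  ext m
  cases m with
  | zero =>
      rw [assoc, coeff_zero_eq_constantCoeff_apply, coeff_zero_eq_constantCoeff_apply,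
        map_mul, map_mul, map_mul, map_sub, constantCoeff_X, zero_mul,
        ← coeff_zero_eq_constantCoeff_apply, ← coeff_zero_eq_constantCoeff_apply, cfq, chq]
      simp
  | succ m =>
      have step1 : coeff (R := ℚ) m (Sq * d⁄dX ℚ hq) =
          coeff (R := ℚ) m (Sq * d⁄dX ℚ (∑ n ∈ range (m + 2), Uq n)) :=
        agree_mul Sq fun j hj => by
          rw [coeff_derivative, coeff_derivative, coeff_hq (show j + 1 ≤ m + 1 by omega)]
      have step2 : X * (Sq * d⁄dX ℚ (∑ n ∈ range (m + 2), Uq n)) =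
          (∑ n ∈ range (m + 2), (Tq n - Uq n)) * Gq := by
        rw [map_sum, Finset.mul_sum, Finset.mul_sum, Finset.sum_mul,
          Finset.sum_range_succ' (fun n => X * (Sq * (d⁄dX ℚ (Uq n)))),
          Finset.sum_range_succ' (fun n => (Tq n - Uq n) * Gq)]
        congr 1
        · refine Finset.sum_congr rfl fun k _ => ?_
          rw [← dUq k]; ring
        · rw [Tq0, Uq0, Derivation.map_one_eq_zero]
          simp
      rw [assoc, coeff_succ_X_mul, step1, ← coeff_succ_X_mul (n := m)
        (φ := Sq * d⁄dX ℚ (∑ n ∈ range (m + 2), Uq n)), step2]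
      rw [mul_comm _ Gq, mul_comm (fq - hq) Gq]
      exact agree_mul Gq fun j hj => by
        rw [map_sub, coeff_fq hj, coeff_hq hj, ← map_sub, ← Finset.sum_sub_distrib]

lemma A1 : d⁄dX ℚ (fq - (1 + X) * Gq) = Gq * (Sq * hq - 2 * Gq) := by
  have hd : d⁄dX ℚ ((1 + X) * Gq) = (1 + X) * Gq ^ 2 + Gq := by
    rw [Derivation.leibniz, hGd]
    simp only [smul_eq_mul, map_add, Derivation.map_one_eq_zero, derivative_X, zero_add, mul_one]
  rw [map_sub, I1, hd]
  linear_combination Gq * hG1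

lemma A2 : X * Sq * d⁄dX ℚ (Sq * hq - 2 * Gq) =
    (X * d⁄dX ℚ Sq - Gq) * (Sq * hq - 2 * Gq) + Sq * Gq * (fq - (1 + X) * Gq) := by
  have hd2 : d⁄dX ℚ ((2 : PowerSeries ℚ) * Gq) = 2 * Gq ^ 2 := by
    rw [two_eq_C, Derivation.leibniz, derivative_C, hGd]
    simp only [smul_eq_mul, mul_zero, add_zero, ← two_eq_C]
  have hd : d⁄dX ℚ (Sq * hq - 2 * Gq) =
      Sq * d⁄dX ℚ hq + hq * d⁄dX ℚ Sq - 2 * Gq ^ 2 := by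
    rw [map_sub, Derivation.leibniz, hd2]
    simp only [smul_eq_mul]
  rw [hd]
  linear_combination Sq * I2 + Gq * Sder + Sq * Gq * hG1
lemma DeltaEps (m : ℕ) :
    coeff (R := ℚ) m (fq - (1 + X) * Gq) = 0 ∧ coeff (R := ℚ) m (Sq * hq - 2 * Gq) = 0 := by
  induction m using Nat.strong_induction_on with
  | _ m ih =>
    match m with
    | 0 =>
      constructor
      · rw [map_sub, cfq, coeff_zero_eq_constantCoeff_apply, map_mul, map_add,
          constantCoeff_one, constantCoeff_X, cGq]
        norm_num
      · rw [map_sub, coeff_zero_eq_constantCoeff_apply, coeff_zero_eq_constantCoeff_apply,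
          map_mul, map_mul, cSq, cGq, ← coeff_zero_eq_constantCoeff_apply, chq]
        simp [map_ofNat]
    | (m+1) =>
      have hD : coeff (R := ℚ) (m+1) (fq - (1 + X) * Gq) = 0 := by
        have h1 : coeff (R := ℚ) m (d⁄dX ℚ (fq - (1 + X) * Gq)) =
            coeff (R := ℚ) (m+1) (fq - (1 + X) * Gq) * ((m : ℚ) + 1) := by
          rw [coeff_derivative]
        have h2 : coeff (R := ℚ) m (Gq * (Sq * hq - 2 * Gq)) = 0 := by
          rw [coeff_mul]
          refine Finset.sum_eq_zero fun p hp => ?_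
          rw [(ih p.2 (Nat.lt_succ_of_le (Finset.HasAntidiagonal.antidiagonal.snd_le hp))).2, mul_zero]
        rw [A1, h2] at h1
        have hm : ((m : ℚ) + 1) ≠ 0 := by positivity
        exact (mul_eq_zero.mp h1.symm).resolve_right hm
      have hE : coeff (R := ℚ) (m+1) (Sq * hq - 2 * Gq) = 0 := by
        have hL : coeff (R := ℚ) (m+1) (X * Sq * d⁄dX ℚ (Sq * hq - 2 * Gq)) =
            2 * ((m : ℚ) + 1) * coeff (R := ℚ) (m+1) (Sq * hq - 2 * Gq) := by
          rw [show X * Sq * d⁄dX ℚ (Sq * hq - 2 * Gq) =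
            X * (Sq * d⁄dX ℚ (Sq * hq - 2 * Gq)) by ring, coeff_succ_X_mul, coeff_mul]
          rw [Finset.Nat.sum_antidiagonal_eq_sum_range_succ
            (fun i j => coeff (R := ℚ) i Sq * coeff (R := ℚ) j (d⁄dX ℚ (Sq * hq - 2 * Gq)))]
          rw [Finset.sum_eq_single 0]
          · rw [coeff_Sq, Nat.sub_zero, coeff_derivative]
            push_cast
            norm_num
            ring
          · intro i hi hne
            have hi' : 1 ≤ i ∧ i ≤ m := ⟨Nat.one_le_iff_ne_zero.mpr hne, by
              simpa [Nat.lt_succ_iff] using hi⟩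
            rw [coeff_derivative, (ih (m - i + 1) (by omega)).2]
            simp
          · intro h
            exact absurd (Finset.mem_range.mpr (Nat.succ_pos m)) h
        have hR : coeff (R := ℚ) (m+1) ((X * d⁄dX ℚ Sq - Gq) * (Sq * hq - 2 * Gq) +
            Sq * Gq * (fq - (1 + X) * Gq)) = - coeff (R := ℚ) (m+1) (Sq * hq - 2 * Gq) := by
          rw [map_add]
          have hRb : coeff (R := ℚ) (m+1) (Sq * Gq * (fq - (1 + X) * Gq)) = 0 := by
            rw [coeff_mul]
            refine Finset.sum_eq_zero fun p hp => ?_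
            rcases Nat.lt_succ_iff_lt_or_eq.mp
              (Nat.lt_succ_of_le (Finset.HasAntidiagonal.antidiagonal.snd_le hp)) with h | h
            · rw [(ih p.2 h).1, mul_zero]
            · rw [h, hD, mul_zero]
          have hRa : coeff (R := ℚ) (m+1) ((X * d⁄dX ℚ Sq - Gq) * (Sq * hq - 2 * Gq)) =
              - coeff (R := ℚ) (m+1) (Sq * hq - 2 * Gq) := by
            rw [coeff_mul, Finset.sum_eq_single (0, m+1)]
            · rw [coeff_zero_eq_constantCoeff_apply, map_sub, map_mul, constantCoeff_X,
                zero_mul, cGq]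
              ring
            · intro p hp hne
              have hmem := Finset.HasAntidiagonal.mem_antidiagonal.mp hp
              have hp2 : p.2 < m + 1 := by
                rcases Nat.lt_or_ge p.2 (m+1) with h | h
                · exact h
                · exfalso; apply hne
                  have : p.2 = m + 1 := le_antisymm (Finset.HasAntidiagonal.antidiagonal.snd_le hp) h
                  have : p.1 = 0 := by omega
                  exact Prod.ext this (by omega)
              rw [(ih p.2 hp2).2, mul_zero]
            · intro h
              exact absurd (Finset.HasAntidiagonal.mem_antidiagonal.mpr (by omega)) h
          rw [hRa, hRb, add_zero]
        rw [A2, hR] at hL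
        have : (2 * ((m:ℚ)+1) + 1) * coeff (R := ℚ) (m+1) (Sq * hq - 2 * Gq) = 0 := by
          linarith [hL]
        have h23 : (2 * ((m:ℚ)+1) + 1) ≠ 0 := by positivity
        exact (mul_eq_zero.mp this).resolve_left h23
      exact ⟨hD, hE⟩

lemma fq_eq : fq = (1 + X) * Gq := by
  ext m
  have := (DeltaEps m).1
  rw [map_sub] at this
  linarith

lemma c4 : C (R := ℚ) 4⁻¹ * 4 = 1 := by
  rw [show (4 : PowerSeries ℚ) = C (R := ℚ) 4 from (map_ofNat (C (R := ℚ)) 4).symm, ← map_mul]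
  norm_num

lemma inv_one_sub_X : (2 * fq + 2) * (C (R := ℚ) 4⁻¹ * (1 - X)) = 1 := by
  rw [fq_eq]
  linear_combination (2 * C (R := ℚ) 4⁻¹ * (1 + X)) * hG1 + c4

lemma coshTerm0 : coshTerm 0 = 1 := by
  simp [coshTerm]

lemma map_Sser (a : ℚ) :
    PowerSeries.map (Polynomial.evalRingHom a) Sser = Sq := by
  ext m
  rw [coeff_map]
  simp [Sser, Sq]

lemma map_geom (a : ℚ) :
    PowerSeries.map (Polynomial.evalRingHom a) geomSer = Gq := by
  ext m
  rw [coeff_map]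
  simp [geomSer, Gq]

lemma map_coshTerm_one (n : ℕ) :
    PowerSeries.map (Polynomial.evalRingHom 1) (coshTerm n) = Tq n := by
  have hc : (Polynomial.evalRingHom 1)
      (Polynomial.C ((Nat.factorial (2 * n) : ℚ)⁻¹) * Polynomial.X ^ n) =
      ((Nat.factorial (2 * n) : ℚ))⁻¹ := by simp
  rw [coshTerm, Tq, map_mul, PowerSeries.map_C, hc, map_pow, map_mul, PowerSeries.map_X,
    map_pow, map_Sser, show X * Sq ^ 2 = Wq from rfl]

lemma map_coshTerm_zero (n : ℕ) :
    PowerSeries.map (Polynomial.evalRingHom 0) (coshTerm (n + 1)) = 0 := by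
  rw [coshTerm, map_mul, PowerSeries.map_C]
  have : (Polynomial.evalRingHom 0)
      (Polynomial.C ((Nat.factorial (2 * (n+1)) : ℚ)⁻¹) * Polynomial.X ^ (n+1)) = 0 := by
    simp
  rw [this, map_zero, zero_mul]

lemma map_coshSer_one :
    PowerSeries.map (Polynomial.evalRingHom 1) coshSer = fq := by
  ext m
  rw [coeff_map, coshSer, coeff_mk, ← coeff_map, map_sum, fq, coeff_mk]
  congr 1
  exact Finset.sum_congr rfl fun n _ => map_coshTerm_one n

lemma map_coshSer_zero :
    PowerSeries.map (Polynomial.evalRingHom 0) coshSer = 1 := by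
  ext m
  rw [coeff_map, coshSer, coeff_mk, ← coeff_map, map_sum]
  rw [Finset.sum_eq_single_of_mem 0 (Finset.mem_range.mpr (Nat.succ_pos m))]
  · rw [coshTerm0, map_one]
  · intro b _ hb
    rcases b with _ | k
    · exact absurd rfl hb
    · rw [map_coshTerm_zero k]

lemma ccDser : constantCoeff (R := Polynomial ℚ) Dser = (Dunit : Polynomial ℚ) := by
  have h1 : constantCoeff (R := Polynomial ℚ) coshSer = 1 := by
    rw [← coeff_zero_eq_constantCoeff_apply, coshSer, coeff_mk]
    simp [coshTerm0]
  have h2 : (Dunit : Polynomial ℚ) = Polynomial.C 4 := rfl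
  rw [Dser, map_add, map_mul, h1, h2, mul_one]
  simp [map_ofNat]
  norm_num

lemma hDinv : Dser * PowerSeries.invOfUnit Dser Dunit = 1 :=
  PowerSeries.mul_invOfUnit _ _ ccDser

lemma map_Dser_one :
    PowerSeries.map (Polynomial.evalRingHom 1) Dser = 2 * fq + 2 := by
  rw [Dser, map_add, map_mul, map_coshSer_one]
  simp [map_ofNat]

lemma map_Dser_zero :
    PowerSeries.map (Polynomial.evalRingHom 0) Dser = 4 := by
  rw [Dser, map_add, map_mul, map_coshSer_zero]
  simp [map_ofNat]
  norm_num

lemma map_inv_one :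
    PowerSeries.map (Polynomial.evalRingHom 1) (PowerSeries.invOfUnit Dser Dunit) =
      C (R := ℚ) 4⁻¹ * (1 - X) := by
  set v := PowerSeries.map (Polynomial.evalRingHom 1) (PowerSeries.invOfUnit Dser Dunit) with hv
  have h1 : (2 * fq + 2) * v = 1 := by
    rw [hv, ← map_Dser_one, ← map_mul, hDinv, map_one]
  calc v = v * ((2 * fq + 2) * (C (R := ℚ) 4⁻¹ * (1 - X))) := by rw [inv_one_sub_X, mul_one]
    _ = (C (R := ℚ) 4⁻¹ * (1 - X)) * ((2 * fq + 2) * v) := by ring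
    _ = C (R := ℚ) 4⁻¹ * (1 - X) := by rw [h1, mul_one]

lemma map_inv_zero :
    PowerSeries.map (Polynomial.evalRingHom 0) (PowerSeries.invOfUnit Dser Dunit) =
      C (R := ℚ) 4⁻¹ := by
  set v := PowerSeries.map (Polynomial.evalRingHom 0) (PowerSeries.invOfUnit Dser Dunit) with hv
  have h1 : 4 * v = 1 := by
    rw [hv, ← map_Dser_zero, ← map_mul, hDinv, map_one]
  calc v = v * (C (R := ℚ) 4⁻¹ * 4) := by rw [c4, mul_one]
    _ = C (R := ℚ) 4⁻¹ * (4 * v) := by ring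
    _ = C (R := ℚ) 4⁻¹ := by rw [h1, mul_one]

lemma coeff_SG (n : ℕ) :
    coeff (R := ℚ) n (Sq * Gq) = ∑ k ∈ range (n + 1), 2 / (2 * (k : ℚ) + 1) := by
  rw [coeff_mul, Finset.Nat.sum_antidiagonal_eq_sum_range_succ
    (fun i j => coeff (R := ℚ) i Sq * coeff (R := ℚ) j Gq)]
  simp [coeff_Sq, coeff_Gq]

lemma ser0 : (4 : PowerSeries ℚ) * Sq * Gq * C (R := ℚ) 4⁻¹ = Sq * Gq := by
  linear_combination (Sq * Gq) * c4

lemma ser1 : (4 : PowerSeries ℚ) * Sq * Gq * (C (R := ℚ) 4⁻¹ * (1 - X)) = Sq := by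
  linear_combination (4 * Sq * C (R := ℚ) 4⁻¹) * hG1 + Sq * c4

theorem stmt19 (n : ℕ) :
    (Rn n).eval 0 = 2 * ∑ k ∈ Finset.range (n + 1), 1 / (2 * (k : ℚ) + 1) ∧
    (Rn n).eval 1 = 2 / (2 * (n : ℚ) + 1) := by
  constructor
  · have e0 : (Rn n).eval 0 = coeff (R := ℚ) n (PowerSeries.map (Polynomial.evalRingHom 0)
        (4 * Sser * geomSer * PowerSeries.invOfUnit Dser Dunit)) := by
      rw [coeff_map]; rfl
    have M0 : PowerSeries.map (Polynomial.evalRingHom 0)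
        (4 * Sser * geomSer * PowerSeries.invOfUnit Dser Dunit) = Sq * Gq := by
      rw [map_mul, map_mul, map_mul, map_Sser, map_geom, map_inv_zero, map_ofNat]
      exact ser0
    rw [e0, M0, coeff_SG, Finset.mul_sum]
    exact Finset.sum_congr rfl fun k _ => (mul_one_div 2 _).symm
  · have e1 : (Rn n).eval 1 = coeff (R := ℚ) n (PowerSeries.map (Polynomial.evalRingHom 1)
        (4 * Sser * geomSer * PowerSeries.invOfUnit Dser Dunit)) := by
      rw [coeff_map]; rfl
    have M1 : PowerSeries.map (Polynomial.evalRingHom 1)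
        (4 * Sser * geomSer * PowerSeries.invOfUnit Dser Dunit) = Sq := by
      rw [map_mul, map_mul, map_mul, map_Sser, map_geom, map_inv_one, map_ofNat]
      exact ser1
    rw [e1, M1, coeff_Sq]

end AuxQ
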